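/- Let 𝒢 be a signed graph with no half-edges that is unbalanced, i.e., 𝒢 contains a loop or a cycle with an odd number of positive edges. Then there exists an integer vector t ∈ ℤⁿ ∩ Z_𝒢^tr (where Z_𝒢^tr = Σ_{v∈Γ(𝒢)} [0, v]) such that t = x + ρ_𝒢 for some mean score sequence x of a random tournament on 𝒢, but t ≠ s + ρ_𝒢 for every score sequence s of a deterministic tournament on 𝒢 (indeed no deterministic score sequence even has the same coordinate sum as x). -/

import Mathlib

open Finset

/-- A signed graph on `[n]` with no half-edges: negative edges, positive edges
and loops. -/
structure SignedGraphNoHalf (n : ℕ) where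
  Eneg : Finset (Fin n × Fin n)
  Epos : Finset (Fin n × Fin n)
  L : Finset (Fin n)

/-- The score of player `i` under probabilities `pm, pp, pl`. -/
noncomputable def scoreSeq {n : ℕ} (G : SignedGraphNoHalf n)
    (pm pp : Fin n → Fin n → ℝ) (pl : Fin n → ℝ) (i : Fin n) : ℝ :=
  (∑ j ∈ univ.filter (fun j => (i, j) ∈ G.Eneg ∨ (j, i) ∈ G.Eneg), (pm i j - 1/2))
  + (∑ j ∈ univ.filter (fun j => (i, j) ∈ G.Epos ∨ (j, i) ∈ G.Epos), (pp i j - 1/2))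
  + (if i ∈ G.L then 2 * (pl i - 1/2) else 0)

/-- Probabilities forming a valid random tournament on `G`. -/
def IsTournament {n : ℕ} (G : SignedGraphNoHalf n)
    (pm pp : Fin n → Fin n → ℝ) (pl : Fin n → ℝ) : Prop :=
  (∀ i j, 0 ≤ pm i j ∧ pm i j ≤ 1) ∧
  (∀ i j, ((i, j) ∈ G.Eneg ∨ (j, i) ∈ G.Eneg) → pm i j = 1 - pm j i) ∧
  (∀ i j, 0 ≤ pp i j ∧ pp i j ≤ 1) ∧
  (∀ i j, pp i j = pp j i) ∧
  (∀ i, 0 ≤ pl i ∧ pl i ≤ 1)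

/-- `x` is the mean score sequence of a random tournament on `G`. -/
def IsMeanScoreSeq {n : ℕ} (G : SignedGraphNoHalf n) (x : Fin n → ℝ) : Prop :=
  ∃ pm pp pl, IsTournament G pm pp pl ∧ ∀ i, x i = scoreSeq G pm pp pl i

/-- `s` is the score sequence of a deterministic tournament on `G`. -/
def IsDetScoreSeq {n : ℕ} (G : SignedGraphNoHalf n) (s : Fin n → ℝ) : Prop :=
  ∃ pm pp pl, IsTournament G pm pp pl ∧
    (∀ i j, ((i, j) ∈ G.Eneg ∨ (j, i) ∈ G.Eneg) → (pm i j = 0 ∨ pm i j = 1)) ∧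
    (∀ i j, ((i, j) ∈ G.Epos ∨ (j, i) ∈ G.Epos) → (pp i j = 0 ∨ pp i j = 1)) ∧
    (∀ i, i ∈ G.L → (pl i = 0 ∨ pl i = 1)) ∧
    (∀ i, s i = scoreSeq G pm pp pl i)

/-- `ρ_𝒢 = (1/2) ∑_{v ∈ Γ(𝒢)} v`, realized as the score sequence with all
probabilities equal to `1`. -/
noncomputable def rho {n : ℕ} (G : SignedGraphNoHalf n) : Fin n → ℝ :=
  scoreSeq G (fun _ _ => 1) (fun _ _ => 1) (fun _ => 1)

section AuxLemmas

open Finset in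
private lemma sum_pairs {n : ℕ} (E : Finset (Fin n × Fin n)) (h : ∀ p ∈ E, p.2 < p.1)
    (g : Fin n → Fin n → ℝ) :
    ∑ i, ∑ j ∈ univ.filter (fun j => (i, j) ∈ E ∨ (j, i) ∈ E), g i j
      = ∑ p ∈ E, (g p.1 p.2 + g p.2 p.1) := by
  have key : ∀ G : Fin n → Fin n → ℝ,
      (∑ i : Fin n, ∑ j : Fin n, if (i, j) ∈ E then G i j else 0) = ∑ p ∈ E, G p.1 p.2 := by
    intro G
    rw [← Finset.sum_product', ← Finset.sum_filter]
    refine Finset.sum_congr ?_ fun p _ => rfl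
    ext p; simp
  have split : ∀ i : Fin n, ∑ j ∈ univ.filter (fun j => (i, j) ∈ E ∨ (j, i) ∈ E), g i j
      = (∑ j : Fin n, if (i, j) ∈ E then g i j else 0)
        + (∑ j : Fin n, if (j, i) ∈ E then g i j else 0) := by
    intro i
    rw [Finset.sum_filter, ← Finset.sum_add_distrib]
    refine Finset.sum_congr rfl fun j _ => ?_
    by_cases h1 : (i, j) ∈ E <;> by_cases h2 : (j, i) ∈ E <;> simp [h1, h2]
    exact absurd (lt_trans (h _ h1) (h _ h2)) (lt_irrefl _)
  rw [Finset.sum_congr rfl (fun i _ => split i), Finset.sum_add_distrib]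
  rw [key g, Finset.sum_comm, key (fun a b => g b a), ← Finset.sum_add_distrib]

open Finset in
private lemma sum_score {n : ℕ} (G : SignedGraphNoHalf n)
    (hne : ∀ p ∈ G.Eneg, p.2 < p.1) (hpe : ∀ p ∈ G.Epos, p.2 < p.1)
    (pm pp : Fin n → Fin n → ℝ) (pl : Fin n → ℝ)
    (hanti : ∀ i j, ((i, j) ∈ G.Eneg ∨ (j, i) ∈ G.Eneg) → pm i j = 1 - pm j i)
    (hsym : ∀ i j, pp i j = pp j i) :
    ∑ i, scoreSeq G pm pp pl i
      = (∑ p ∈ G.Epos, (2 * pp p.1 p.2 - 1)) + (∑ i ∈ G.L, (2 * pl i - 1)) := by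
  unfold scoreSeq
  rw [Finset.sum_add_distrib, Finset.sum_add_distrib,
    sum_pairs G.Eneg hne, sum_pairs G.Epos hpe]
  have h1 : ∑ p ∈ G.Eneg, ((pm p.1 p.2 - 1/2) + (pm p.2 p.1 - 1/2)) = 0 := by
    refine Finset.sum_eq_zero fun p hp => ?_
    rw [hanti p.1 p.2 (Or.inl hp)]; ring
  have h2 : ∑ p ∈ G.Epos, ((pp p.1 p.2 - 1/2) + (pp p.2 p.1 - 1/2))
      = ∑ p ∈ G.Epos, (2 * pp p.1 p.2 - 1) := by
    refine Finset.sum_congr rfl fun p hp => ?_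
    rw [← hsym p.1 p.2]; ring
  have h3 : (∑ i : Fin n, if i ∈ G.L then 2 * (pl i - 1/2) else 0)
      = ∑ i ∈ G.L, (2 * pl i - 1) := by
    rw [Finset.sum_ite_mem, Finset.univ_inter]
    exact Finset.sum_congr rfl fun i _ => by ring
  rw [h1, h2, h3]; ring

open Finset in
private lemma t_eq {n : ℕ} (G : SignedGraphNoHalf n)
    (pm pp : Fin n → Fin n → ℝ) (pl : Fin n → ℝ) (i : Fin n) :
    scoreSeq G pm pp pl i + rho G i
      = (∑ j ∈ univ.filter (fun j => (i, j) ∈ G.Eneg ∨ (j, i) ∈ G.Eneg), pm i j)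
        + (∑ j ∈ univ.filter (fun j => (i, j) ∈ G.Epos ∨ (j, i) ∈ G.Epos), pp i j)
        + (if i ∈ G.L then 2 * pl i else 0) := by
  unfold rho scoreSeq
  have A : ∀ (S : Finset (Fin n)) (f : Fin n → ℝ),
      (∑ j ∈ S, (f j - 1/2)) + (∑ j ∈ S, ((1:ℝ) - 1/2)) = ∑ j ∈ S, f j := by
    intro S f
    rw [← Finset.sum_add_distrib]
    exact Finset.sum_congr rfl fun j _ => by ring
  have h3 : (if i ∈ G.L then 2 * (pl i - 1/2) else 0)
      + (if i ∈ G.L then 2 * ((1:ℝ) - 1/2) else 0) = (if i ∈ G.L then 2 * pl i else 0) := by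
    by_cases h : i ∈ G.L <;> simp [h]; ring
  linear_combination A _ (pm i) + A _ (pp i) + h3

private lemma sum_binary {α : Type*} (s : Finset α) (f : α → ℝ)
    (h : ∀ a ∈ s, f a = 0 ∨ f a = 1) :
    ∃ z : ℤ, ∑ a ∈ s, 2 * f a = 2 * z := by
  classical
  refine ⟨(s.filter (fun a => f a = 1)).card, ?_⟩
  rw [← Finset.sum_filter_add_sum_filter_not s (fun a => f a = 1)]
  have h1 : ∑ a ∈ s.filter (fun a => f a = 1), 2 * f a
      = 2 * ((s.filter (fun a => f a = 1)).card : ℝ) := by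
    rw [Finset.sum_congr rfl (fun a ha => by rw [(Finset.mem_filter.mp ha).2])]
    simp [mul_comm]
  have h2 : ∑ a ∈ s.filter (fun a => ¬ f a = 1), 2 * f a = 0 := by
    refine Finset.sum_eq_zero fun a ha => ?_
    rcases h a (Finset.mem_filter.mp ha).1 with h0 | h0
    · rw [h0]; ring
    · exact absurd h0 (Finset.mem_filter.mp ha).2
  rw [h1, h2]
  push_cast
  ring

open Finset in
private lemma main_construct {n : ℕ} (G : SignedGraphNoHalf n)
    (hne : ∀ p ∈ G.Eneg, p.2 < p.1) (hpe : ∀ p ∈ G.Epos, p.2 < p.1)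
    (pm0 pp0 : Fin n → Fin n → ℝ) (pl0 : Fin n → ℝ)
    (htour : IsTournament G pm0 pp0 pl0)
    (hint : ∀ i, ∃ z : ℤ, scoreSeq G pm0 pp0 pl0 i + rho G i = z)
    (hodd : ∃ b : ℤ, (∑ p ∈ G.Epos, 2 * pp0 p.1 p.2) + (∑ i ∈ G.L, 2 * pl0 i)
        = 2 * b + 1) :
    ∃ (t x : Fin n → ℝ),
      (∀ i, ∃ z : ℤ, t i = z) ∧
      IsMeanScoreSeq G x ∧
      (∀ i, t i = x i + rho G i) ∧
      (∀ s, IsDetScoreSeq G s →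
        (∑ i, s i ≠ ∑ i, x i) ∧ (fun i => s i + rho G i) ≠ t) := by
  set x : Fin n → ℝ := scoreSeq G pm0 pp0 pl0 with hx
  refine ⟨fun i => x i + rho G i, x, hint, ⟨pm0, pp0, pl0, htour, fun i => rfl⟩,
    fun i => rfl, ?_⟩
  intro s hdet
  obtain ⟨b, hb⟩ := hodd
  have key : ∑ i, s i ≠ ∑ i, x i := by
    obtain ⟨qm, qp, ql, ⟨_, hanti, _, hsym, _⟩, hqp, hql, hq3, hs⟩ := hdet
    have hsum_s : ∑ i, s i
        = (∑ p ∈ G.Epos, (2 * qp p.1 p.2 - 1)) + (∑ i ∈ G.L, (2 * ql i - 1)) := by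
      rw [Finset.sum_congr rfl (fun i _ => hs i)]
      exact sum_score G hne hpe qm qp ql hanti hsym
    have hsum_x : ∑ i, x i
        = (∑ p ∈ G.Epos, (2 * pp0 p.1 p.2 - 1)) + (∑ i ∈ G.L, (2 * pl0 i - 1)) :=
      sum_score G hne hpe pm0 pp0 pl0 htour.2.1 htour.2.2.2.1
    obtain ⟨a1, ha1⟩ := sum_binary G.Epos (fun p => qp p.1 p.2)
      (fun p hp => hql p.1 p.2 (Or.inl hp))
    obtain ⟨a2, ha2⟩ := sum_binary G.L ql (fun i hi => hq3 i hi)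
    intro hcontra
    rw [hsum_s, hsum_x] at hcontra
    rw [Finset.sum_sub_distrib, Finset.sum_sub_distrib, Finset.sum_sub_distrib,
      Finset.sum_sub_distrib] at hcontra
    simp only [Finset.sum_const, nsmul_eq_mul, mul_one] at hcontra
    have : ((2 * a1 + 2 * a2 : ℤ) : ℝ) = ((2 * b + 1 : ℤ) : ℝ) := by
      push_cast
      linarith [ha1, ha2, hb]
    have := Int.cast_injective this
    omega
  refine ⟨key, fun hcontra => key ?_⟩
  have : ∀ i, s i + rho G i = x i + rho G i := fun i => congrFun hcontra i
  exact Finset.sum_congr rfl fun i _ => by linarith [this i]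

end AuxLemmas


/-- `G` contains a cycle with an odd number of positive edges. -/
def HasOddPositiveCycle {n : ℕ} (G : SignedGraphNoHalf n) : Prop :=
  ∃ (m : ℕ) (v : Fin (m + 2) → Fin n) (sgn : Fin (m + 2) → Bool),
    Function.Injective v ∧
    (∀ k : Fin (m + 2),
      if sgn k then ((v k, v (k + 1)) ∈ G.Epos ∨ (v (k + 1), v k) ∈ G.Epos)
      else ((v k, v (k + 1)) ∈ G.Eneg ∨ (v (k + 1), v k) ∈ G.Eneg)) ∧
    (∀ k l : Fin (m + 2), k ≠ l →
      s(v k, v (k + 1)) = s(v l, v (l + 1)) → sgn k ≠ sgn l) ∧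
    (univ.filter (fun k => sgn k = true)).card % 2 = 1

/-- If `𝒢` has no half-edges and is unbalanced (it has a loop or a cycle with
an odd number of positive edges), then some integer point of the translated
zonotope is only realizable randomly: indeed no deterministic score sequence
even has the same coordinate sum. -/
theorem unbalanced_integer_point_not_deterministic
    {n : ℕ} (G : SignedGraphNoHalf n)
    (hne : ∀ p ∈ G.Eneg, p.2 < p.1) (hpe : ∀ p ∈ G.Epos, p.2 < p.1)
    (hunbal : G.L.Nonempty ∨ HasOddPositiveCycle G) :
    ∃ (t x : Fin n → ℝ),
      (∀ i, ∃ z : ℤ, t i = z) ∧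
      IsMeanScoreSeq G x ∧
      (∀ i, t i = x i + rho G i) ∧
      (∀ s, IsDetScoreSeq G s →
        (∑ i, s i ≠ ∑ i, x i) ∧ (fun i => s i + rho G i) ≠ t) := by
  rcases hunbal with ⟨i0, hi0⟩ | hcyc
  · -- loop case
    refine main_construct G hne hpe
      (fun i j => if j < i then (1:ℝ) else 0) (fun _ _ => 1)
      (fun i => if i = i0 then 1/2 else 1) ?_ ?_ ?_
    · refine ⟨fun i j => by dsimp only; constructor <;> split <;> norm_num, ?_,
        fun i j => ⟨zero_le_one, le_refl 1⟩, fun i j => rfl,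
        fun i => by dsimp only; constructor <;> split <;> norm_num⟩
      intro i j hij
      rcases hij with h | h
      · have hlt : j < i := hne _ h
        simp [hlt, asymm hlt]
      · have hlt : i < j := hne _ h
        simp [hlt, asymm hlt]
    · intro i
      rw [t_eq]
      refine ⟨((univ.filter (fun j => (i, j) ∈ G.Eneg ∨ (j, i) ∈ G.Eneg)).filter
          (fun j => j < i)).card
        + (univ.filter (fun j => (i, j) ∈ G.Epos ∨ (j, i) ∈ G.Epos)).card
        + (if i ∈ G.L then (if i = i0 then 1 else 2) else 0), ?_⟩
      have e1 : ∑ j ∈ univ.filter (fun j => (i, j) ∈ G.Eneg ∨ (j, i) ∈ G.Eneg),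
          (if j < i then (1:ℝ) else 0)
          = (((univ.filter (fun j => (i, j) ∈ G.Eneg ∨ (j, i) ∈ G.Eneg)).filter
            (fun j => j < i)).card : ℝ) := by
        rw [Finset.sum_boole]
      have e3 : (if i ∈ G.L then 2 * (if i = i0 then (1/2:ℝ) else 1) else 0)
          = ((if i ∈ G.L then (if i = i0 then 1 else 2) else 0 : ℤ) : ℝ) := by
        split_ifs <;> norm_num
      rw [e1, e3]
      push_cast
      simp
    · have e : ∑ i ∈ G.L, 2 * (if i = i0 then (1/2:ℝ) else 1)
          = 2 * (G.L.card : ℝ) - 1 := by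
        have h2 : ∀ i ∈ G.L, 2 * (if i = i0 then (1/2:ℝ) else 1)
            = 2 - (if i = i0 then (1:ℝ) else 0) := by
          intro i _; split <;> norm_num
        rw [Finset.sum_congr rfl h2, Finset.sum_sub_distrib, Finset.sum_const,
          Finset.sum_ite_eq' G.L i0 (fun _ => (1:ℝ)), if_pos hi0]
        push_cast; ring
      refine ⟨(G.Epos.card : ℤ) + G.L.card - 1, ?_⟩
      rw [e]
      simp [Finset.sum_const]
      push_cast; ring
  · -- cycle case
    classical
    obtain ⟨m, v, sgn, hinj, hcyc, hdist, hoddc⟩ := hcyc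
    set Cneg : Fin n → Fin n → Prop :=
      fun i j => ∃ k, sgn k = false ∧ s(i, j) = s(v k, v (k + 1)) with hCneg
    set Cpos : Fin n → Fin n → Prop :=
      fun i j => ∃ k, sgn k = true ∧ s(i, j) = s(v k, v (k + 1)) with hCpos
    have hCnegSwap : ∀ i j, Cneg i j → Cneg j i := by
      rintro i j ⟨k, hk, he⟩; exact ⟨k, hk, (Sym2.eq_swap).trans he⟩
    have hCposSwap : ∀ i j, Cpos i j → Cpos j i := by
      rintro i j ⟨k, hk, he⟩; exact ⟨k, hk, (Sym2.eq_swap).trans he⟩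
    have hCnegEdge : ∀ i j, Cneg i j → ((i, j) ∈ G.Eneg ∨ (j, i) ∈ G.Eneg) := by
      rintro i j ⟨k, hk, he⟩
      have hm := hcyc k
      rw [hk] at hm
      simp only [Bool.false_eq_true, if_false] at hm
      rcases Sym2.eq_iff.mp he with ⟨h1, h2⟩ | ⟨h1, h2⟩
      · rw [h1, h2]; exact hm
      · rw [h1, h2]; tauto
    have hCposEdge : ∀ i j, Cpos i j → ((i, j) ∈ G.Epos ∨ (j, i) ∈ G.Epos) := by
      rintro i j ⟨k, hk, he⟩
      have hm := hcyc k
      rw [hk] at hm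
      simp only [if_true] at hm
      rcases Sym2.eq_iff.mp he with ⟨h1, h2⟩ | ⟨h1, h2⟩
      · rw [h1, h2]; exact hm
      · rw [h1, h2]; tauto
    have hcount : ∀ i : Fin n,
        ((Finset.univ.filter (fun j => Cneg i j)).card
          + (Finset.univ.filter (fun j => Cpos i j)).card = 0) ∨
        ((Finset.univ.filter (fun j => Cneg i j)).card
          + (Finset.univ.filter (fun j => Cpos i j)).card = 2) := by
      intro i
      by_cases hiv : ∃ k0, v k0 = i
      · right
        obtain ⟨k0, rfl⟩ := hiv
        have hky : k0 - 1 + 1 = k0 := sub_add_cancel k0 1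
        have hiffn : ∀ j, Cneg (v k0) j ↔
            ((j = v (k0 + 1) ∧ sgn k0 = false)
              ∨ (j = v (k0 - 1) ∧ sgn (k0 - 1) = false)) := by
          intro j
          constructor
          · rintro ⟨k, hk, he⟩
            rcases Sym2.eq_iff.mp he with ⟨h1, h2⟩ | ⟨h1, h2⟩
            · have hk0 : k = k0 := hinj h1.symm
              subst hk0
              exact Or.inl ⟨h2, hk⟩
            · have hkk : k = k0 - 1 := by rw [hinj h1]; exact (add_sub_cancel_right k 1).symm
              subst hkk
              exact Or.inr ⟨h2, hk⟩
          · rintro (⟨rfl, hk⟩ | ⟨rfl, hk⟩)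
            · exact ⟨k0, hk, rfl⟩
            · exact ⟨k0 - 1, hk, by rw [hky]; exact Sym2.eq_swap⟩
        have hiffp : ∀ j, Cpos (v k0) j ↔
            ((j = v (k0 + 1) ∧ sgn k0 = true)
              ∨ (j = v (k0 - 1) ∧ sgn (k0 - 1) = true)) := by
          intro j
          constructor
          · rintro ⟨k, hk, he⟩
            rcases Sym2.eq_iff.mp he with ⟨h1, h2⟩ | ⟨h1, h2⟩
            · have hk0 : k = k0 := hinj h1.symm
              subst hk0
              exact Or.inl ⟨h2, hk⟩
            · have hkk : k = k0 - 1 := by rw [hinj h1]; exact (add_sub_cancel_right k 1).symm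
              subst hkk
              exact Or.inr ⟨h2, hk⟩
          · rintro (⟨rfl, hk⟩ | ⟨rfl, hk⟩)
            · exact ⟨k0, hk, rfl⟩
            · exact ⟨k0 - 1, hk, by rw [hky]; exact Sym2.eq_swap⟩
        have hfn : Finset.univ.filter (fun j => Cneg (v k0) j)
            = Finset.univ.filter (fun j => (j = v (k0 + 1) ∧ sgn k0 = false)
              ∨ (j = v (k0 - 1) ∧ sgn (k0 - 1) = false)) :=
          Finset.filter_congr (fun j _ => hiffn j)
        have hfp : Finset.univ.filter (fun j => Cpos (v k0) j)
            = Finset.univ.filter (fun j => (j = v (k0 + 1) ∧ sgn k0 = true)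
              ∨ (j = v (k0 - 1) ∧ sgn (k0 - 1) = true)) :=
          Finset.filter_congr (fun j _ => hiffp j)
        rw [hfn, hfp]
        by_cases hab : v (k0 + 1) = v (k0 - 1)
        · -- degenerate 2-cycle: m = 0
          have h2z : k0 + 1 = k0 - 1 := hinj hab
          have hm0 : m = 0 := by
            have h4 : (2 : Fin (m + 2)) = 0 := by
              have h5 : k0 + 2 = k0 + 0 := by
                rw [add_zero]
                calc k0 + 2 = k0 + 1 + 1 := by rw [add_assoc, show ((1 : Fin (m + 2)) + 1) = 2 from Fin.ext (by simp only [Fin.val_add, Fin.val_one]; rfl)]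
                  _ = k0 - 1 + 1 := by rw [h2z]
                  _ = k0 := hky
              exact add_left_cancel h5
            have h6 : (1 : Fin (m + 2)) + 1 = 0 := by
              rw [show ((1 : Fin (m + 2)) + 1) = 2 from Fin.ext (by simp only [Fin.val_add, Fin.val_one]; rfl)]
              exact h4
            have h7 := congrArg Fin.val h6
            simp only [Fin.val_add, Fin.val_one, Fin.val_zero] at h7
            have h8 : (m + 2) ∣ (1 + 1) := Nat.dvd_of_mod_eq_zero h7
            have h9 := Nat.le_of_dvd (by norm_num) h8
            omega
          subst hm0
          have hx01 : sgn k0 ≠ sgn (k0 - 1) := by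
            have hcard : (Finset.univ.filter (fun k => sgn k = true)).card
                = (if sgn 0 = true then 1 else 0) + (if sgn 1 = true then 1 else 0) := by
              rw [Finset.card_filter]
              exact Fin.sum_univ_two _
            rw [hcard] at hoddc
            have hk01 : k0 = 0 ∨ k0 = 1 := by
              have := k0.isLt
              have hv : k0.val = 0 ∨ k0.val = 1 := by omega
              rcases hv with hv | hv
              · left; exact Fin.ext hv
              · right; exact Fin.ext hv
            have hsub0 : (0 : Fin (0 + 2)) - 1 = 1 := by decide
            have hsub1 : (1 : Fin (0 + 2)) - 1 = 0 := by decide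
            cases hs0 : sgn 0 <;> cases hs1 : sgn 1 <;>
              rw [hs0, hs1] at hoddc <;> simp at hoddc <;>
              rcases hk01 with rfl | rfl <;>
              simp [hsub0, hsub1, hs0, hs1]
          have hpn : Finset.univ.filter (fun j => (j = v (k0 + 1) ∧ sgn k0 = false)
              ∨ (j = v (k0 - 1) ∧ sgn (k0 - 1) = false))
              = Finset.univ.filter (fun j => j = v (k0 + 1)) := by
            refine Finset.filter_congr fun j _ => ?_
            rw [← hab]
            cases hs0 : sgn k0 <;> cases hs1 : sgn (k0 - 1) <;>
              simp [hs0, hs1] <;> simp [hs0, hs1] at hx01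
          have hpp : Finset.univ.filter (fun j => (j = v (k0 + 1) ∧ sgn k0 = true)
              ∨ (j = v (k0 - 1) ∧ sgn (k0 - 1) = true))
              = Finset.univ.filter (fun j => j = v (k0 + 1)) := by
            refine Finset.filter_congr fun j _ => ?_
            rw [← hab]
            cases hs0 : sgn k0 <;> cases hs1 : sgn (k0 - 1) <;>
              simp [hs0, hs1] <;> simp [hs0, hs1] at hx01
          rw [hpn, hpp, Finset.filter_eq']
          simp
        · -- proper cycle at this vertex
          have hvne : v (k0 + 1) ≠ v (k0 - 1) := hab
          have hcard2 : (Finset.univ.filter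
              (fun j => j = v (k0 + 1) ∨ j = v (k0 - 1))).card = 2 := by
            rw [Finset.filter_or, Finset.filter_eq', Finset.filter_eq']
            simp only [Finset.mem_univ, if_pos]
            rw [Finset.card_union_of_disjoint (by simp [Ne.symm hvne, hvne])]
            simp
          have hcard1a : (Finset.univ.filter (fun j => j = v (k0 + 1))).card = 1 := by
            rw [Finset.filter_eq']; simp
          have hcard1b : (Finset.univ.filter (fun j => j = v (k0 - 1))).card = 1 := by
            rw [Finset.filter_eq']; simp
          cases hs0 : sgn k0 <;> cases hs1 : sgn (k0 - 1) <;>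
            simp only [eq_self_iff_true, and_true, Bool.false_eq_true, Bool.true_eq_false,
              and_false, or_false, false_or, Finset.filter_false, Finset.card_empty,
              add_zero, zero_add] <;>
            first
              | exact hcard2
              | rw [hcard1a, hcard1b]
              | rw [hcard1b, hcard1a]
      · left
        have hn0 : Finset.univ.filter (fun j => Cneg i j) = ∅ := by
          rw [Finset.filter_eq_empty_iff]
          rintro j _ ⟨k, hk, he⟩
          rcases Sym2.eq_iff.mp he with ⟨h1, _⟩ | ⟨h1, _⟩
          · exact hiv ⟨k, h1.symm⟩
          · exact hiv ⟨k + 1, h1.symm⟩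
        have hp0 : Finset.univ.filter (fun j => Cpos i j) = ∅ := by
          rw [Finset.filter_eq_empty_iff]
          rintro j _ ⟨k, hk, he⟩
          rcases Sym2.eq_iff.mp he with ⟨h1, _⟩ | ⟨h1, _⟩
          · exact hiv ⟨k, h1.symm⟩
          · exact hiv ⟨k + 1, h1.symm⟩
        rw [hn0, hp0]
        simp

    refine main_construct G hne hpe
      (fun i j => if Cneg i j then (1/2:ℝ) else if j < i then 1 else 0)
      (fun i j => if Cpos i j then (1/2:ℝ) else 1)
      (fun _ => 1) ?_ ?_ ?_
    · refine ⟨fun i j => by dsimp only; split_ifs <;> norm_num, ?_,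
        fun i j => by dsimp only; split_ifs <;> norm_num,
        fun i j => ?_, fun i => by norm_num⟩
      · intro i j hij
        dsimp only
        by_cases hc : Cneg i j
        · rw [if_pos hc, if_pos (hCnegSwap i j hc)]; norm_num
        · have hc' : ¬ Cneg j i := fun h => hc (hCnegSwap j i h)
          rw [if_neg hc, if_neg hc']
          rcases hij with h | h
          · have hlt : j < i := hne _ h
            simp [hlt, asymm hlt]
          · have hlt : i < j := hne _ h
            simp [hlt, asymm hlt]
      · dsimp only
        by_cases hc : Cpos i j
        · rw [if_pos hc, if_pos (hCposSwap i j hc)]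
        · have hc' : ¬ Cpos j i := fun h => hc (hCposSwap j i h)
          rw [if_neg hc, if_neg hc']
    · -- integrality
      intro i
      rw [t_eq]
      beta_reduce
      rw [← Finset.sum_filter_add_sum_filter_not
          (Finset.univ.filter (fun j => (i, j) ∈ G.Eneg ∨ (j, i) ∈ G.Eneg))
          (fun j => Cneg i j),
        ← Finset.sum_filter_add_sum_filter_not
          (Finset.univ.filter (fun j => (i, j) ∈ G.Epos ∨ (j, i) ∈ G.Epos))
          (fun j => Cpos i j)]
      have hfn : (Finset.univ.filter (fun j => (i, j) ∈ G.Eneg ∨ (j, i) ∈ G.Eneg)).filter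
          (fun j => Cneg i j) = Finset.univ.filter (fun j => Cneg i j) := by
        ext j
        simp only [Finset.mem_filter, Finset.mem_univ, true_and]
        exact ⟨fun h => h.2, fun h => ⟨hCnegEdge i j h, h⟩⟩
      have hfp : (Finset.univ.filter (fun j => (i, j) ∈ G.Epos ∨ (j, i) ∈ G.Epos)).filter
          (fun j => Cpos i j) = Finset.univ.filter (fun j => Cpos i j) := by
        ext j
        simp only [Finset.mem_filter, Finset.mem_univ, true_and]
        exact ⟨fun h => h.2, fun h => ⟨hCposEdge i j h, h⟩⟩
      have e1 : ∑ j ∈ (Finset.univ.filter (fun j => (i, j) ∈ G.Eneg ∨ (j, i) ∈ G.Eneg)).filter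
            (fun j => Cneg i j), (if Cneg i j then (1/2:ℝ) else if j < i then 1 else 0)
          = ((Finset.univ.filter (fun j => Cneg i j)).card : ℝ) * (1/2) := by
        rw [Finset.sum_congr rfl (fun j hj => if_pos (Finset.mem_filter.mp hj).2),
          Finset.sum_const, hfn, nsmul_eq_mul]
      have e2 : ∑ j ∈ (Finset.univ.filter (fun j => (i, j) ∈ G.Eneg ∨ (j, i) ∈ G.Eneg)).filter
            (fun j => ¬ Cneg i j), (if Cneg i j then (1/2:ℝ) else if j < i then 1 else 0)
          = ((((Finset.univ.filter (fun j => (i, j) ∈ G.Eneg ∨ (j, i) ∈ G.Eneg)).filter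
            (fun j => ¬ Cneg i j)).filter (fun j => j < i)).card : ℝ) := by
        rw [Finset.sum_congr rfl (fun j hj => if_neg (Finset.mem_filter.mp hj).2),
          Finset.sum_boole]
      have e3 : ∑ j ∈ (Finset.univ.filter (fun j => (i, j) ∈ G.Epos ∨ (j, i) ∈ G.Epos)).filter
            (fun j => Cpos i j), (if Cpos i j then (1/2:ℝ) else 1)
          = ((Finset.univ.filter (fun j => Cpos i j)).card : ℝ) * (1/2) := by
        rw [Finset.sum_congr rfl (fun j hj => if_pos (Finset.mem_filter.mp hj).2),
          Finset.sum_const, hfp, nsmul_eq_mul]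
      have e4 : ∑ j ∈ (Finset.univ.filter (fun j => (i, j) ∈ G.Epos ∨ (j, i) ∈ G.Epos)).filter
            (fun j => ¬ Cpos i j), (if Cpos i j then (1/2:ℝ) else 1)
          = (((Finset.univ.filter (fun j => (i, j) ∈ G.Epos ∨ (j, i) ∈ G.Epos)).filter
            (fun j => ¬ Cpos i j)).card : ℝ) := by
        rw [Finset.sum_congr rfl (fun j hj => if_neg (Finset.mem_filter.mp hj).2)]
        simp
      rw [e1, e2, e3, e4]
      have hC := hcount i
      have hCr : ((Finset.univ.filter (fun j => Cneg i j)).card : ℝ)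
          + ((Finset.univ.filter (fun j => Cpos i j)).card : ℝ) = 0 ∨
          ((Finset.univ.filter (fun j => Cneg i j)).card : ℝ)
          + ((Finset.univ.filter (fun j => Cpos i j)).card : ℝ) = 2 := by
        rcases hC with hC | hC
        · left; exact_mod_cast congrArg (Nat.cast : ℕ → ℝ) hC
        · right; exact_mod_cast congrArg (Nat.cast : ℕ → ℝ) hC
      by_cases hiL : i ∈ G.L
      · rw [if_pos hiL]
        rcases hCr with hC | hC
        · refine ⟨((((Finset.univ.filter (fun j => (i, j) ∈ G.Eneg ∨ (j, i) ∈ G.Eneg)).filter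
              (fun j => ¬ Cneg i j)).filter (fun j => j < i)).card : ℤ)
            + (((Finset.univ.filter (fun j => (i, j) ∈ G.Epos ∨ (j, i) ∈ G.Epos)).filter
              (fun j => ¬ Cpos i j)).card : ℤ) + 2, ?_⟩
          push_cast
          linarith
        · refine ⟨((((Finset.univ.filter (fun j => (i, j) ∈ G.Eneg ∨ (j, i) ∈ G.Eneg)).filter
              (fun j => ¬ Cneg i j)).filter (fun j => j < i)).card : ℤ)
            + (((Finset.univ.filter (fun j => (i, j) ∈ G.Epos ∨ (j, i) ∈ G.Epos)).filter
              (fun j => ¬ Cpos i j)).card : ℤ) + 3, ?_⟩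
          push_cast
          linarith
      · rw [if_neg hiL]
        rcases hCr with hC | hC
        · refine ⟨((((Finset.univ.filter (fun j => (i, j) ∈ G.Eneg ∨ (j, i) ∈ G.Eneg)).filter
              (fun j => ¬ Cneg i j)).filter (fun j => j < i)).card : ℤ)
            + (((Finset.univ.filter (fun j => (i, j) ∈ G.Epos ∨ (j, i) ∈ G.Epos)).filter
              (fun j => ¬ Cpos i j)).card : ℤ), ?_⟩
          push_cast
          linarith
        · refine ⟨((((Finset.univ.filter (fun j => (i, j) ∈ G.Eneg ∨ (j, i) ∈ G.Eneg)).filter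
              (fun j => ¬ Cneg i j)).filter (fun j => j < i)).card : ℤ)
            + (((Finset.univ.filter (fun j => (i, j) ∈ G.Epos ∨ (j, i) ∈ G.Epos)).filter
              (fun j => ¬ Cpos i j)).card : ℤ) + 1, ?_⟩
          push_cast
          linarith
    · -- odd sum
      have hbij : (Finset.univ.filter (fun k => sgn k = true)).card
          = (G.Epos.filter (fun p => Cpos p.1 p.2)).card := by
        refine Finset.card_bij
          (fun k _ => if v (k + 1) < v k then (v k, v (k + 1)) else (v (k + 1), v k))
          ?_ ?_ ?_
        · intro k hk
          have hks : sgn k = true := (Finset.mem_filter.mp hk).2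
          have hm := hcyc k
          rw [if_pos hks] at hm
          rcases hm with hm | hm
          · have hlt : v (k + 1) < v k := hpe _ hm
            rw [if_pos hlt]
            exact Finset.mem_filter.mpr ⟨hm, ⟨k, hks, rfl⟩⟩
          · have hlt : v k < v (k + 1) := hpe _ hm
            rw [if_neg (asymm hlt)]
            exact Finset.mem_filter.mpr ⟨hm, ⟨k, hks, Sym2.eq_swap⟩⟩
        · intro k hk k' hk' heq
          by_contra hkk
          have hsym : s(v k, v (k + 1)) = s(v k', v (k' + 1)) := by
            have h1 : s(v k, v (k + 1))
                = s((if v (k+1) < v k then (v k, v (k+1)) else (v (k+1), v k)).1,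
                    (if v (k+1) < v k then (v k, v (k+1)) else (v (k+1), v k)).2) := by
              split_ifs <;> simp [Sym2.eq_swap]
            have h2 : s(v k', v (k' + 1))
                = s((if v (k'+1) < v k' then (v k', v (k'+1)) else (v (k'+1), v k')).1,
                    (if v (k'+1) < v k' then (v k', v (k'+1)) else (v (k'+1), v k')).2) := by
              split_ifs <;> simp [Sym2.eq_swap]
            rw [h1, h2, heq]
          exact (hdist k k' hkk hsym) (((Finset.mem_filter.mp hk).2).trans
            ((Finset.mem_filter.mp hk').2).symm)
        · intro p hp
          obtain ⟨hpE, k, hks, hs⟩ := Finset.mem_filter.mp hp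
          refine ⟨k, Finset.mem_filter.mpr ⟨Finset.mem_univ k, hks⟩, ?_⟩
          have hlt : p.2 < p.1 := hpe p hpE
          rcases Sym2.eq_iff.mp hs with ⟨h1, h2⟩ | ⟨h1, h2⟩
          · rw [if_pos (by rw [← h1, ← h2]; exact hlt)]
            exact Prod.ext h1.symm h2.symm
          · rw [if_neg (by rw [← h1, ← h2]; exact asymm hlt)]
            exact Prod.ext h1.symm h2.symm
      obtain ⟨c, hc⟩ : ∃ c : ℕ, (G.Epos.filter (fun p => Cpos p.1 p.2)).card = 2 * c + 1 := by
        refine ⟨(G.Epos.filter (fun p => Cpos p.1 p.2)).card / 2, ?_⟩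
        rw [← hbij]
        omega
      refine ⟨(c : ℤ) + (G.Epos.filter (fun p => ¬ Cpos p.1 p.2)).card + G.L.card, ?_⟩
      rw [← Finset.sum_filter_add_sum_filter_not G.Epos (fun p => Cpos p.1 p.2)]
      have e1 : ∑ p ∈ G.Epos.filter (fun p => Cpos p.1 p.2),
          2 * (if Cpos p.1 p.2 then (1/2:ℝ) else 1)
          = ((G.Epos.filter (fun p => Cpos p.1 p.2)).card : ℝ) := by
        rw [Finset.sum_congr rfl
          (fun p hp => by rw [if_pos (Finset.mem_filter.mp hp).2])]
        simp
      have e2 : ∑ p ∈ G.Epos.filter (fun p => ¬ Cpos p.1 p.2),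
          2 * (if Cpos p.1 p.2 then (1/2:ℝ) else 1)
          = 2 * ((G.Epos.filter (fun p => ¬ Cpos p.1 p.2)).card : ℝ) := by
        rw [Finset.sum_congr rfl
          (fun p hp => by rw [if_neg (Finset.mem_filter.mp hp).2])]
        simp [mul_comm]
      rw [e1, e2, hc]
      simp only [Finset.sum_const, nsmul_eq_mul]
      push_cast
      ring
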